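/- Let K be a perfect field of characteristic p and R = K[x₁,…,x_n]. Let I = ⟨f₁+g₁,…,f_m+g_m, h₁,…,h_l⟩ be a nonzero ideal contained in 𝔪, with each f_i nonzero. Let d₀ = min_i wmd(f_i), and assume wmd(g_i) ≥ d₀ for every nonzero g_i and wmd(h_j) ≥ d₀ for every nonzero h_j. Then for every a ∈ (ℕ⁺)ⁿ the F-threshold satisfies c^{𝔪(a)}(I) ≤ w(a)/d₀. -/

import Mathlib

open Filter

open MvPolynomial

lemma wdeg_add' {n : ℕ} (w : Fin n → ℕ) (b c : Fin n →₀ ℕ) :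
    (∑ i, w i * (b + c) i) = (∑ i, w i * b i) + (∑ i, w i * c i) := by
  simp [Finsupp.add_apply, mul_add, Finset.sum_add_distrib]

def wIdeal {n : ℕ} (w : Fin n → ℕ) (K : Type*) [CommSemiring K] (d : ℕ) :
    Ideal (MvPolynomial (Fin n) K) where
  carrier := {x | ∀ b ∈ x.support, d ≤ ∑ i, w i * b i}
  zero_mem' := by simp
  add_mem' := by
    intro x y hx hy b hb
    rcases Finset.mem_union.mp (MvPolynomial.support_add hb) with h | h
    · exact hx b h
    · exact hy b h
  smul_mem' := by
    intro r x hx b hb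
    rw [smul_eq_mul] at hb
    obtain ⟨u, hu, v, hv, rfl⟩ := Finset.mem_add.mp (MvPolynomial.support_mul r x hb)
    rw [wdeg_add' w u v]
    exact (hx v hv).trans (Nat.le_add_left _ _)

lemma mem_wIdeal {n : ℕ} {w : Fin n → ℕ} {K : Type*} [CommSemiring K] {d : ℕ}
    {x : MvPolynomial (Fin n) K} :
    x ∈ wIdeal w K d ↔ ∀ b ∈ x.support, d ≤ ∑ i, w i * b i := Iff.rfl

lemma wIdeal_mul_le {n : ℕ} (w : Fin n → ℕ) (K : Type*) [CommSemiring K] (d d' : ℕ) :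
    wIdeal w K d * wIdeal w K d' ≤ wIdeal w K (d + d') := by
  rw [Ideal.mul_le]
  intro r hr s hs b hb
  obtain ⟨u, hu, v, hv, rfl⟩ := Finset.mem_add.mp (MvPolynomial.support_mul r s hb)
  rw [wdeg_add' w u v]
  exact Nat.add_le_add (hr u hu) (hs v hv)

lemma pow_le_wIdeal {n : ℕ} {w : Fin n → ℕ} {K : Type*} [CommSemiring K]
    {I : Ideal (MvPolynomial (Fin n) K)} {d : ℕ} (hI : I ≤ wIdeal w K d) (N : ℕ) :
    I ^ N ≤ wIdeal w K (N * d) := by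
  induction N with
  | zero => intro x _ b hb; simp
  | succ N ih =>
      rw [pow_succ, Nat.succ_mul]
      exact (Ideal.mul_mono ih hI).trans (wIdeal_mul_le w K (N * d) d)

lemma mem_monIdeal {n : ℕ} {K : Type*} [CommSemiring K] (c : Fin n → ℕ)
    (x : MvPolynomial (Fin n) K) (hx : ∀ b ∈ x.support, ∃ i, c i ≤ b i) :
    x ∈ Ideal.span (Set.range fun i : Fin n => (MvPolynomial.X i : MvPolynomial (Fin n) K) ^ c i) := by
  have hsum : (∑ b ∈ x.support, monomial b (x.coeff b)) ∈
      Ideal.span (Set.range fun i : Fin n => (MvPolynomial.X i : MvPolynomial (Fin n) K) ^ c i) := by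
    apply Ideal.sum_mem
    intro b hb
    obtain ⟨i, hi⟩ := hx b hb
    have hb' : (monomial b (x.coeff b) : MvPolynomial (Fin n) K) =
        monomial (b - Finsupp.single i (c i)) (x.coeff b) * X i ^ c i := by
      rw [X_pow_eq_monomial, monomial_mul, mul_one, tsub_add_cancel_of_le]
      exact Finsupp.single_le_iff.mpr hi
    rw [hb']
    exact Ideal.mul_mem_left _ _ (Ideal.subset_span ⟨i, rfl⟩)
  rwa [← x.as_sum] at hsum


/-- The Frobenius power `I^{[p^e]}`. -/
def frobeniusPower (p e : ℕ) {R : Type*} [CommRing R] (I : Ideal R) : Ideal R :=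
  Ideal.span ((fun f => f ^ p ^ e) '' (I : Set R))

/-- The ν-invariant `ν^𝔞_I(p^e) = max {n ∈ ℕ : Iⁿ ⊄ 𝔞^{[p^e]}}`. -/
noncomputable def nuInv (p : ℕ) {R : Type*} [CommRing R] (𝔞 I : Ideal R) (e : ℕ) : ℕ :=
  sSup {n : ℕ | ¬ I ^ n ≤ frobeniusPower p e 𝔞}

/-- Weighted degree of an exponent vector: `w(a) = Σ wᵢ aᵢ`. -/
def wdeg {n : ℕ} (w : Fin n → ℕ) (a : Fin n →₀ ℕ) : ℕ := ∑ i, w i * a i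

/-- `wmd f = min {w(a) : a ∈ Supp f}`. -/
noncomputable def wmd {n : ℕ} {K : Type*} [CommSemiring K] (w : Fin n → ℕ)
    (f : MvPolynomial (Fin n) K) : ℕ :=
  sInf (wdeg w '' (f.support : Set (Fin n →₀ ℕ)))

/-- The monomial ideal `𝔪(a) = ⟨x₁^{a₁},…,xₙ^{aₙ}⟩`. -/
noncomputable def mIdeal {n : ℕ} (K : Type*) [CommSemiring K] (a : Fin n → ℕ) :
    Ideal (MvPolynomial (Fin n) K) :=
  Ideal.span (Set.range fun i : Fin n => MvPolynomial.X i ^ a i)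

/-- The maximal ideal `𝔪 = ⟨x₁,…,xₙ⟩`. -/
noncomputable def mMax {n : ℕ} (K : Type*) [CommSemiring K] : Ideal (MvPolynomial (Fin n) K) :=
  Ideal.span (Set.range (MvPolynomial.X : Fin n → MvPolynomial (Fin n) K))

/-- Let `K` be a perfect field of characteristic `p`, `R = K[x₁,…,xₙ]`,
`I = ⟨f₁+g₁,…,f_m+g_m, h₁,…,h_l⟩` a nonzero ideal contained in `𝔪`, with each `fᵢ`
nonzero, `d₀ = minᵢ wmd(fᵢ)`, `wmd(gᵢ) ≥ d₀` for every nonzero `gᵢ` and `wmd(hⱼ) ≥ d₀`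
for every nonzero `hⱼ`. Then for every `a ∈ (ℕ⁺)ⁿ` the F-threshold satisfies
`c^{𝔪(a)}(I) ≤ w(a)/d₀` (stated multiplied through by `d₀`). -/
theorem fThreshold_le_of_wmd_bound (p : ℕ) [Fact p.Prime] (K : Type*) [Field K]
    [CharP K p] [PerfectRing K p] (n : ℕ) (w : Fin n → ℕ) (hw : ∀ i, 0 < w i)
    (m l : ℕ) (f g : Fin m → MvPolynomial (Fin n) K) (h : Fin l → MvPolynomial (Fin n) K)
    (I : Ideal (MvPolynomial (Fin n) K))
    (hI : I = Ideal.span (Set.range (fun i => f i + g i) ∪ Set.range h))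
    (hInz : I ≠ ⊥) (hIm : I ≤ mMax K)
    (hf : ∀ i, f i ≠ 0)
    (d₀ : ℕ) (hd₀ : IsLeast {k : ℕ | ∃ i, wmd w (f i) = k} d₀)
    (hg : ∀ i, g i ≠ 0 → d₀ ≤ wmd w (g i))
    (hh : ∀ j, h j ≠ 0 → d₀ ≤ wmd w (h j))
    (a : Fin n → ℕ) (ha : ∀ i, 0 < a i)
    (c : ℝ) (hc : Tendsto (fun e : ℕ => (nuInv p (mIdeal K a) I e : ℝ) / (p : ℝ) ^ e)
      atTop (nhds c)) :
    (d₀ : ℝ) * c ≤ (∑ i, w i * a i : ℕ) := by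
  have hp : (0:ℝ) < p := by exact_mod_cast (Fact.out : p.Prime).pos
  set W : ℕ := ∑ i, w i * a i with hW
  -- I is contained in wIdeal w K d₀
  have hIw : I ≤ wIdeal w K d₀ := by
    rw [hI, Ideal.span_le]
    rintro x (⟨i, rfl⟩ | ⟨j, rfl⟩)
    · intro b hb
      rcases Finset.mem_union.mp (MvPolynomial.support_add hb) with hbf | hbg
      · exact le_trans (hd₀.2 ⟨i, rfl⟩)
          (Nat.sInf_le ⟨b, Finset.mem_coe.mpr hbf, rfl⟩)
      · have hgne : g i ≠ 0 := by
          intro h0; rw [h0] at hbg; simp at hbg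
        exact le_trans (hg i hgne) (Nat.sInf_le ⟨b, Finset.mem_coe.mpr hbg, rfl⟩)
    · intro b hb
      have hne : h j ≠ 0 := by
        intro h0; rw [h0] at hb; simp at hb
      exact le_trans (hh j hne) (Nat.sInf_le ⟨b, Finset.mem_coe.mpr hb, rfl⟩)
  -- key inequality for every e
  have key : ∀ e : ℕ, d₀ * nuInv p (mIdeal K a) I e ≤ p ^ e * W := by
    intro e
    set F := frobeniusPower p e (mIdeal K a) with hF
    have hJF : Ideal.span (Set.range fun i : Fin n =>
        (MvPolynomial.X i : MvPolynomial (Fin n) K) ^ (a i * p ^ e)) ≤ F := by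
      rw [Ideal.span_le]
      rintro _ ⟨i, rfl⟩
      show (MvPolynomial.X i : MvPolynomial (Fin n) K) ^ (a i * p ^ e) ∈ F
      have hx : (MvPolynomial.X i : MvPolynomial (Fin n) K) ^ (a i * p ^ e)
          = (MvPolynomial.X i ^ a i) ^ (p ^ e) := by rw [← pow_mul]
      rw [hx]
      exact Ideal.subset_span ⟨MvPolynomial.X i ^ a i, Ideal.subset_span ⟨i, rfl⟩, rfl⟩
    have claim : ∀ N ∈ {k : ℕ | ¬ I ^ k ≤ F}, d₀ * N ≤ p ^ e * W := by
      intro N hN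
      obtain ⟨x, hxI, hxF⟩ := SetLike.not_le_iff_exists.mp hN
      have hsup : ∃ b ∈ x.support, ∀ i, b i < a i * p ^ e := by
        by_contra hcon
        push_neg at hcon
        exact hxF (hJF (mem_monIdeal (fun i => a i * p ^ e) x
          (fun b hb => hcon b hb)))
      obtain ⟨b, hb, hblt⟩ := hsup
      have h1 : N * d₀ ≤ ∑ i, w i * b i :=
        (pow_le_wIdeal hIw N) hxI b hb
      have h2 : (∑ i, w i * b i) ≤ p ^ e * W := by
        calc (∑ i, w i * b i) ≤ ∑ i, w i * (a i * p ^ e) :=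
              Finset.sum_le_sum fun i _ => Nat.mul_le_mul_left _ (le_of_lt (hblt i))
          _ = p ^ e * W := by
              rw [hW, Finset.mul_sum]
              exact Finset.sum_congr rfl fun i _ => by ring
      calc d₀ * N = N * d₀ := Nat.mul_comm _ _
        _ ≤ ∑ i, w i * b i := h1
        _ ≤ p ^ e * W := h2
    show d₀ * sSup {k : ℕ | ¬ I ^ k ≤ F} ≤ p ^ e * W
    rcases Set.eq_empty_or_nonempty {k : ℕ | ¬ I ^ k ≤ F} with hS | hS
    · rw [hS, csSup_empty]; simp
    · rcases Nat.eq_zero_or_pos d₀ with hd0 | hd0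
      · simp [hd0]
      · have hbdd : BddAbove {k : ℕ | ¬ I ^ k ≤ F} :=
          ⟨p ^ e * W, fun N hN =>
            le_trans (Nat.le_mul_of_pos_left N hd0) (claim N hN)⟩
        exact claim _ (Nat.sSup_mem hS hbdd)
  -- conclude
  rcases Nat.eq_zero_or_pos d₀ with hd0 | hd0
  · have hc0 : 0 ≤ c := by
      refine ge_of_tendsto hc (Eventually.of_forall fun e => ?_)
      positivity
    simp only [hd0, Nat.cast_zero, zero_mul]
    positivity
  · have hd0R : (0:ℝ) < d₀ := by exact_mod_cast hd0
    have hle : ∀ e : ℕ, (nuInv p (mIdeal K a) I e : ℝ) / (p:ℝ) ^ e ≤ (W:ℝ) / d₀ := by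
      intro e
      rw [div_le_div_iff₀ (by positivity) hd0R]
      have := key e
      calc (nuInv p (mIdeal K a) I e : ℝ) * d₀
          = (d₀ * nuInv p (mIdeal K a) I e : ℕ) := by push_cast; ring
        _ ≤ ((p ^ e * W : ℕ) : ℝ) := by exact_mod_cast this
        _ = (W:ℝ) * (p:ℝ) ^ e := by push_cast; ring
    have hcle : c ≤ (W:ℝ) / d₀ := le_of_tendsto hc (Eventually.of_forall hle)
    calc (d₀:ℝ) * c ≤ (d₀:ℝ) * ((W:ℝ) / d₀) := by
          exact mul_le_mul_of_nonneg_left hcle (le_of_lt hd0R)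
      _ = (W:ℝ) := by field_simp
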